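/- Every finite simple graph that is outer 1-planar has treewidth at most three. -/

import Mathlib

/-- The set of vertices of `ZMod n` strictly between `a` and `b`, traversing the circle
from `a` to `b` in the increasing direction of the cyclic order. -/
def arcBetween {n : ℕ} (a b : ZMod n) : Set (ZMod n) :=
  {x | 0 < (x - a).val ∧ (x - a).val < (b - a).val}

/-- Edges `{a,b}` and `{c,d}` with four distinct endpoints cross if exactly one of
`c`, `d` lies strictly between `a` and `b` on one of the two arcs. -/
def EdgesCross {n : ℕ} (a b c d : ZMod n) : Prop :=
  a ≠ b ∧ a ≠ c ∧ a ≠ d ∧ b ≠ c ∧ b ≠ d ∧ c ≠ d ∧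
  (Xor' (c ∈ arcBetween a b) (d ∈ arcBetween a b) ∨
   Xor' (c ∈ arcBetween b a) (d ∈ arcBetween b a))

/-- Crossing of (unordered) edges, as elements of `Sym2 (ZMod n)`. -/
def Sym2Cross {n : ℕ} (e f : Sym2 (ZMod n)) : Prop :=
  ∃ a b c d : ZMod n, e = s(a, b) ∧ f = s(c, d) ∧ EdgesCross a b c d

/-- The natural cyclic ordering of `ZMod n` is an outer `k`-planar drawing of `G`
if every edge of `G` crosses at most `k` other edges of `G`. -/
def OuterKPlanarDrawing {n : ℕ} (G : SimpleGraph (ZMod n)) (k : ℕ) : Prop :=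
  ∀ e ∈ G.edgeSet, {e' | e' ∈ G.edgeSet ∧ Sym2Cross e e'}.ncard ≤ k

/-- A finite simple graph is outer `k`-planar if there is a bijection of its vertex set
with `ZMod n` (where `n` is the number of vertices) under which every edge crosses
at most `k` other edges. -/
def OuterKPlanar {V : Type*} [Fintype V] (G : SimpleGraph V) (k : ℕ) : Prop :=
  ∃ f : V ≃ ZMod (Fintype.card V),
    OuterKPlanarDrawing (G.map f.toEmbedding) k

/-- `G` has a tree decomposition of width at most `t`: a finite tree `T` with a bag
`bag i ⊆ V(G)` for each node `i`, such that every vertex lies in some bag, both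
endpoints of every edge lie in some common bag, the nodes whose bag contains a given
vertex induce a connected subtree of `T`, and every bag has size at most `t + 1`. -/
def HasTreeDecompOfWidthLE {V : Type*} (G : SimpleGraph V) (t : ℕ) : Prop :=
  ∃ (ι : Type) (_ : Fintype ι) (T : SimpleGraph ι) (bag : ι → Finset V),
    T.IsTree ∧
    (∀ v : V, ∃ i, v ∈ bag i) ∧
    (∀ u v : V, G.Adj u v → ∃ i, u ∈ bag i ∧ v ∈ bag i) ∧
    (∀ v : V, (T.induce {i | v ∈ bag i}).Connected) ∧
    (∀ i, (bag i).card ≤ t + 1)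


def CrossN (a b c d : ℕ) : Prop :=
  a ≠ b ∧ a ≠ c ∧ a ≠ d ∧ b ≠ c ∧ b ≠ d ∧ c ≠ d ∧
    Xor' (min a b < c ∧ c < max a b) (min a b < d ∧ d < max a b)

def CleanC (Ed : ℕ → ℕ → Prop) (i j : ℕ) : Prop :=
  ∀ p q, Ed p q → i < p → p < j → (i ≤ q ∧ q ≤ j)

section NatPart

variable {Ed : ℕ → ℕ → Prop}

lemma quadClean
    (HK : ∀ u v p q r t, Ed u v → Ed p q → Ed r t →
      CrossN u v p q → CrossN u v r t → ((p = r ∧ q = t) ∨ (p = t ∧ q = r)))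
    {i c b j : ℕ} (h1 : i < c) (h2 : c < b) (h3 : b < j)
    (hcl : CleanC Ed i j) (he : Ed i b) (hf : Ed c j) :
    CleanC Ed i c ∧ CleanC Ed c b ∧ CleanC Ed b j := by
  refine ⟨?_, ?_, ?_⟩
  · intro s t hst hs1 hs2
    obtain ⟨ht1, ht2⟩ := hcl s t hst hs1 (by omega)
    by_contra hcon
    rcases eq_or_lt_of_le ht2 with heq | htj
    · have := HK i b c j s t he hf hst (by simp only [CrossN, Xor', xor_def]; omega)
        (by simp only [CrossN, Xor', xor_def]; omega)
      omega
    · have := HK c j i b s t hf he hst (by simp only [CrossN, Xor', xor_def]; omega)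
        (by simp only [CrossN, Xor', xor_def]; omega)
      omega
  · intro s t hst hs1 hs2
    obtain ⟨ht1, ht2⟩ := hcl s t hst (by omega) (by omega)
    by_contra hcon
    rcases lt_or_ge t c with htc | htc
    · have := HK c j i b s t hf he hst (by simp only [CrossN, Xor', xor_def]; omega)
        (by simp only [CrossN, Xor', xor_def]; omega)
      omega
    · have := HK i b c j s t he hf hst (by simp only [CrossN, Xor', xor_def]; omega)
        (by simp only [CrossN, Xor', xor_def]; omega)
      omega
  · intro s t hst hs1 hs2
    obtain ⟨ht1, ht2⟩ := hcl s t hst (by omega) hs2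
    by_contra hcon
    rcases lt_or_ge t c with htc | htc
    · have := HK c j i b s t hf he hst (by simp only [CrossN, Xor', xor_def]; omega)
        (by simp only [CrossN, Xor', xor_def]; omega)
      omega
    · have := HK i b c j s t he hf hst (by simp only [CrossN, Xor', xor_def]; omega)
        (by simp only [CrossN, Xor', xor_def]; omega)
      omega

lemma splitLemma (hsym : ∀ u v, Ed u v → Ed v u)
    (HK : ∀ u v p q r t, Ed u v → Ed p q → Ed r t →
      CrossN u v p q → CrossN u v r t → ((p = r ∧ q = t) ∨ (p = t ∧ q = r)))
    {i j : ℕ} (hij : i + 1 < j) (hcl : CleanC Ed i j) :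
    (∃ c b, i < c ∧ c < b ∧ b < j ∧ CleanC Ed i c ∧ CleanC Ed c b ∧ CleanC Ed b j) ∨
    (∃ m, i < m ∧ m < j ∧ CleanC Ed i m ∧ CleanC Ed m j) := by
  classical
  set P : ℕ → Prop := fun x => i < x ∧ CleanC Ed i x with hPdef
  have hP1 : P (i + 1) := ⟨by omega, fun p q hpq hp1 hp2 => by omega⟩
  set m := Nat.findGreatest P (j - 1) with hm
  have him : i + 1 ≤ m := Nat.le_findGreatest (by omega) hP1
  have hmj : m ≤ j - 1 := Nat.findGreatest_le _
  have hPm : P m := Nat.findGreatest_spec (by omega) hP1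
  obtain ⟨hPm1, hPm2⟩ := hPm
  by_cases hclm : CleanC Ed m j
  · exact Or.inr ⟨m, by omega, by omega, hPm2, hclm⟩
  rw [CleanC] at hclm
  push_neg at hclm
  obtain ⟨u, q, hEuq, hmu, huj, hq⟩ := hclm
  have hqij := hcl u q hEuq (by omega) huj
  have hqm : q < m := by
    by_contra hcon
    push_neg at hcon
    have := hq hcon
    omega
  have hqi : q = i := by
    by_contra hne
    have := hPm2 q u (hsym u q hEuq) (by omega) hqm
    omega
  subst hqi
  have hEiu : Ed q u := hsym u q hEuq
  have hncu : ¬ P u := Nat.findGreatest_is_greatest (P := P) (n := j - 1) (by omega) (by omega)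
  have hnclean : ¬ CleanC Ed q u := fun hcl' => hncu ⟨by omega, hcl'⟩
  rw [CleanC] at hnclean
  push_neg at hnclean
  obtain ⟨p, w, hEpw, hip, hpu, hw⟩ := hnclean
  have hwij := hcl p w hEpw hip (by omega)
  have hwu : u < w := by
    have := hw hwij.1
    omega
  rcases eq_or_lt_of_le hwij.2 with hwj | hwj
  · subst hwj
    obtain ⟨Q1, Q2, Q3⟩ := quadClean HK hip hpu huj hcl hEiu hEpw
    exact Or.inl ⟨p, u, hip, hpu, huj, Q1, Q2, Q3⟩
  · exfalso
    have hclw : CleanC Ed q w := by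
      intro s t hst hs1 hs2
      obtain ⟨ht1, ht2⟩ := hcl s t hst hs1 (by omega)
      by_contra hcon
      have htw : w < t := by omega
      rcases lt_trichotomy s u with hsu | rfl | hsu
      · have := HK q u s t p w hEiu hst hEpw (by simp only [CrossN, Xor', xor_def]; omega)
          (by simp only [CrossN, Xor', xor_def]; omega)
        omega
      · have := HK p w q s s t hEpw hEiu hst (by simp only [CrossN, Xor', xor_def]; omega)
          (by simp only [CrossN, Xor', xor_def]; omega)
        omega
      · have := HK p w q u s t hEpw hEiu hst (by simp only [CrossN, Xor', xor_def]; omega)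
          (by simp only [CrossN, Xor', xor_def]; omega)
        omega
    exact Nat.findGreatest_is_greatest (P := P) (n := j - 1) (show m < w by omega) (by omega) ⟨by omega, hclw⟩

end NatPart
/-- A rooted tree decomposition of the part of the graph lying in positions `[i,j]`. -/
structure RD (Ed : ℕ → ℕ → Prop) (i j : ℕ) where
  ι : Type
  fin : Fintype ι
  root : ι
  par : ι → ι
  rk : ι → ℕ
  bag : ι → Finset ℕ
  vtop : ℕ → ι
  hroot : par root = root
  hpar : ∀ x, x ≠ root → rk (par x) < rk x
  hsub : ∀ x, bag x ⊆ Finset.Icc i j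
  hcard : ∀ x, (bag x).card ≤ 4
  hrooti : i ∈ bag root
  hrootj : j ∈ bag root
  hvmem : ∀ v x, v ∈ bag x → v ∈ bag (vtop v)
  hconn : ∀ v x, v ∈ bag x → x ≠ vtop v → v ∈ bag (par x)
  hvroot : ∀ v, v ∈ bag root → vtop v = root
  hcovv : ∀ v, i ≤ v → v ≤ j → ∃ x, v ∈ bag x
  hcove : ∀ u v, Ed u v → i ≤ u → u ≤ j → i ≤ v → v ≤ j → ∃ x, u ∈ bag x ∧ v ∈ bag x

section GluePart

variable {Ed : ℕ → ℕ → Prop} {k : ℕ} {aa bb : Fin k → ℕ}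

open Classical in
noncomputable def gpar (R : ∀ t, RD Ed (aa t) (bb t)) :
    Option ((t : Fin k) × (R t).ι) → Option ((t : Fin k) × (R t).ι)
  | none => none
  | some p => if p.2 = (R p.1).root then none else some ⟨p.1, (R p.1).par p.2⟩

def grk (R : ∀ t, RD Ed (aa t) (bb t)) : Option ((t : Fin k) × (R t).ι) → ℕ
  | none => 0
  | some p => (R p.1).rk p.2 + 1

def gbag (B : Finset ℕ) (R : ∀ t, RD Ed (aa t) (bb t)) :
    Option ((t : Fin k) × (R t).ι) → Finset ℕ
  | none => B
  | some p => (R p.1).bag p.2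

open Classical in
noncomputable def gvtop (B : Finset ℕ) (R : ∀ t, RD Ed (aa t) (bb t)) (v : ℕ) :
    Option ((t : Fin k) × (R t).ι) :=
  if v ∈ B then none
  else if h : ∃ t : Fin k, ∃ x, v ∈ (R t).bag x then some ⟨h.choose, (R h.choose).vtop v⟩
  else none

lemma gvtop_eq (B : Finset ℕ) (R : ∀ t, RD Ed (aa t) (bb t))
    (hdisj : ∀ t t', t ≠ t' → ∀ v, aa t ≤ v → v ≤ bb t → aa t' ≤ v → v ≤ bb t' → v ∈ B)
    {v : ℕ} {t : Fin k} {x : (R t).ι} (hv : v ∈ (R t).bag x) (hvB : v ∉ B) :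
    gvtop B R v = some ⟨t, (R t).vtop v⟩ := by
  have h : ∃ t' : Fin k, ∃ x', v ∈ (R t').bag x' := ⟨t, x, hv⟩
  have hch : h.choose = t := by
    by_contra hne
    obtain ⟨x', hx'⟩ := h.choose_spec
    have h1 := Finset.mem_Icc.mp ((R h.choose).hsub x' hx')
    have h2 := Finset.mem_Icc.mp ((R t).hsub x hv)
    exact hvB (hdisj h.choose t hne v h1.1 h1.2 h2.1 h2.2)
  unfold gvtop
  rw [if_neg hvB, dif_pos h]
  subst hch
  rfl

lemma glue_ex {i j : ℕ} (B : Finset ℕ) (R : ∀ t, RD Ed (aa t) (bb t))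
    (hBi : i ∈ B) (hBj : j ∈ B) (hBsub : ∀ v ∈ B, i ≤ v ∧ v ≤ j) (hBcard : B.card ≤ 4)
    (haB : ∀ t, aa t ∈ B) (hbB : ∀ t, bb t ∈ B)
    (hdisj : ∀ t t', t ≠ t' → ∀ v, aa t ≤ v → v ≤ bb t → aa t' ≤ v → v ≤ bb t' → v ∈ B)
    (hends : ∀ t v, v ∈ B → aa t ≤ v → v ≤ bb t → v = aa t ∨ v = bb t)
    (hcv : ∀ v, i ≤ v → v ≤ j → v ∈ B ∨ ∃ t, aa t ≤ v ∧ v ≤ bb t)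
    (hce : ∀ u v, Ed u v → i ≤ u → u ≤ j → i ≤ v → v ≤ j →
      (u ∈ B ∧ v ∈ B) ∨ ∃ t, aa t ≤ u ∧ u ≤ bb t ∧ aa t ≤ v ∧ v ≤ bb t) :
    Nonempty (RD Ed i j) := by
  classical
  haveI : ∀ t, Fintype (R t).ι := fun t => (R t).fin
  have hbag_range : ∀ (t : Fin k) (x : (R t).ι) v, v ∈ (R t).bag x → aa t ≤ v ∧ v ≤ bb t :=
    fun t x v hv => Finset.mem_Icc.mp ((R t).hsub x hv)
  have hvend : ∀ (t : Fin k) v, v ∈ B → aa t ≤ v → v ≤ bb t → (R t).vtop v = (R t).root := by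
    intro t v hvB hv1 hv2
    rcases hends t v hvB hv1 hv2 with rfl | rfl
    · exact (R t).hvroot _ (R t).hrooti
    · exact (R t).hvroot _ (R t).hrootj
  refine ⟨{
    ι := Option ((t : Fin k) × (R t).ι)
    fin := inferInstance
    root := none
    par := gpar R
    rk := grk R
    bag := gbag B R
    vtop := gvtop B R
    hroot := rfl
    hpar := ?_
    hsub := ?_
    hcard := ?_
    hrooti := hBi
    hrootj := hBj
    hvmem := ?_
    hconn := ?_
    hvroot := ?_
    hcovv := ?_
    hcove := ?_ }⟩
  · rintro (_ | ⟨t, x⟩) hne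
    · exact absurd rfl hne
    · by_cases hx : x = (R t).root
      · simp only [gpar, grk, if_pos hx]
        omega
      · simp only [gpar, grk, if_neg hx]
        have := (R t).hpar x hx
        omega
  · rintro (_ | ⟨t, x⟩)
    · intro v hv
      exact Finset.mem_Icc.mpr (hBsub v hv)
    · intro v hv
      have h1 := hbag_range t x v hv
      have h2 := hBsub _ (haB t)
      have h3 := hBsub _ (hbB t)
      exact Finset.mem_Icc.mpr (by omega)
  · rintro (_ | ⟨t, x⟩)
    · exact hBcard
    · exact (R t).hcard x
  · rintro v (_ | ⟨t, x⟩) hv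
    · have hvB : v ∈ B := hv
      simp only [gvtop, if_pos hvB]
      exact hvB
    · by_cases hvB : v ∈ B
      · simp only [gvtop, if_pos hvB]
        exact hvB
      · rw [gvtop_eq B R hdisj hv hvB]
        exact (R t).hvmem v x hv
  · rintro v (_ | ⟨t, x⟩) hv hne
    · exfalso
      apply hne
      have hvB : v ∈ B := hv
      simp only [gvtop, if_pos hvB]
    · have hrange := hbag_range t x v hv
      by_cases hvB : v ∈ B
      · have hvt := hvend t v hvB hrange.1 hrange.2
        by_cases hx : x = (R t).root
        · have hpareq : gpar R (some ⟨t, x⟩) = none := by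
            simp only [gpar, if_pos hx]
          rw [hpareq]
          exact hvB
        · have hpareq : gpar R (some ⟨t, x⟩) = some ⟨t, (R t).par x⟩ := by
            simp only [gpar, if_neg hx]
          rw [hpareq]
          exact (R t).hconn v x hv (by rw [hvt]; exact hx)
      · have hvtop := gvtop_eq B R hdisj hv hvB
        have hxvt : x ≠ (R t).vtop v := by
          intro h0
          apply hne
          rw [hvtop, h0]
        have hx : x ≠ (R t).root := by
          intro h0
          exact hxvt (h0.trans ((R t).hvroot v (h0 ▸ hv)).symm)
        have hpareq : gpar R (some ⟨t, x⟩) = some ⟨t, (R t).par x⟩ := by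
          simp only [gpar, if_neg hx]
        rw [hpareq]
        exact (R t).hconn v x hv hxvt
  · intro v hv
    have hvB : v ∈ B := hv
    simp only [gvtop, if_pos hvB]
  · intro v h1 h2
    rcases hcv v h1 h2 with hB | ⟨t, ht1, ht2⟩
    · exact ⟨none, hB⟩
    · obtain ⟨x, hx⟩ := (R t).hcovv v ht1 ht2
      exact ⟨some ⟨t, x⟩, hx⟩
  · intro u v hE h1 h2 h3 h4
    rcases hce u v hE h1 h2 h3 h4 with ⟨hB1, hB2⟩ | ⟨t, ht1, ht2, ht3, ht4⟩
    · exact ⟨none, hB1, hB2⟩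
    · obtain ⟨x, hx1, hx2⟩ := (R t).hcove u v hE ht1 ht2 ht3 ht4
      exact ⟨some ⟨t, x⟩, hx1, hx2⟩

end GluePart
section BuildPart

variable {Ed : ℕ → ℕ → Prop}

lemma card_le_four (a b c d : ℕ) : ({a, b, c, d} : Finset ℕ).card ≤ 4 := by
  have h1 := Finset.card_insert_le a ({b, c, d} : Finset ℕ)
  have h2 := Finset.card_insert_le b ({c, d} : Finset ℕ)
  have h3 := Finset.card_insert_le c ({d} : Finset ℕ)
  have h4 : ({d} : Finset ℕ).card = 1 := Finset.card_singleton d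
  omega

lemma hedge3 (hsym : ∀ u v, Ed u v → Ed v u) {i m j : ℕ} (him : i < m) (hmj : m < j)
    (C1 : CleanC Ed i m) (C2 : CleanC Ed m j) :
    ∀ u v, Ed u v → i ≤ u → u ≤ j → i ≤ v → v ≤ j →
      (u ∈ ({i, m, j} : Finset ℕ) ∧ v ∈ ({i, m, j} : Finset ℕ)) ∨
      (i ≤ u ∧ u ≤ m ∧ i ≤ v ∧ v ≤ m) ∨ (m ≤ u ∧ u ≤ j ∧ m ≤ v ∧ v ≤ j) := by
  intro u v hE hu1 hu2 hv1 hv2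
  have K1 : ¬(i < u ∧ u < m) ∨ (i ≤ v ∧ v ≤ m) := by
    by_cases h : i < u ∧ u < m
    · exact Or.inr (C1 u v hE h.1 h.2)
    · exact Or.inl h
  have K2 : ¬(m < u ∧ u < j) ∨ (m ≤ v ∧ v ≤ j) := by
    by_cases h : m < u ∧ u < j
    · exact Or.inr (C2 u v hE h.1 h.2)
    · exact Or.inl h
  have K3 : ¬(i < v ∧ v < m) ∨ (i ≤ u ∧ u ≤ m) := by
    by_cases h : i < v ∧ v < m
    · exact Or.inr (C1 v u (hsym u v hE) h.1 h.2)
    · exact Or.inl h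
  have K4 : ¬(m < v ∧ v < j) ∨ (m ≤ u ∧ u ≤ j) := by
    by_cases h : m < v ∧ v < j
    · exact Or.inr (C2 v u (hsym u v hE) h.1 h.2)
    · exact Or.inl h
  simp only [Finset.mem_insert, Finset.mem_singleton]
  omega

lemma hedge4 (hsym : ∀ u v, Ed u v → Ed v u) {i c b j : ℕ} (h1 : i < c) (h2 : c < b) (h3 : b < j)
    (C1 : CleanC Ed i c) (C2 : CleanC Ed c b) (C3 : CleanC Ed b j) :
    ∀ u v, Ed u v → i ≤ u → u ≤ j → i ≤ v → v ≤ j →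
      (u ∈ ({i, c, b, j} : Finset ℕ) ∧ v ∈ ({i, c, b, j} : Finset ℕ)) ∨
      (i ≤ u ∧ u ≤ c ∧ i ≤ v ∧ v ≤ c) ∨ (c ≤ u ∧ u ≤ b ∧ c ≤ v ∧ v ≤ b) ∨
      (b ≤ u ∧ u ≤ j ∧ b ≤ v ∧ v ≤ j) := by
  intro u v hE hu1 hu2 hv1 hv2
  have K1 : ¬(i < u ∧ u < c) ∨ (i ≤ v ∧ v ≤ c) := by
    by_cases h : i < u ∧ u < c
    · exact Or.inr (C1 u v hE h.1 h.2)
    · exact Or.inl h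
  have K2 : ¬(c < u ∧ u < b) ∨ (c ≤ v ∧ v ≤ b) := by
    by_cases h : c < u ∧ u < b
    · exact Or.inr (C2 u v hE h.1 h.2)
    · exact Or.inl h
  have K3 : ¬(b < u ∧ u < j) ∨ (b ≤ v ∧ v ≤ j) := by
    by_cases h : b < u ∧ u < j
    · exact Or.inr (C3 u v hE h.1 h.2)
    · exact Or.inl h
  have K4 : ¬(i < v ∧ v < c) ∨ (i ≤ u ∧ u ≤ c) := by
    by_cases h : i < v ∧ v < c
    · exact Or.inr (C1 v u (hsym u v hE) h.1 h.2)
    · exact Or.inl h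
  have K5 : ¬(c < v ∧ v < b) ∨ (c ≤ u ∧ u ≤ b) := by
    by_cases h : c < v ∧ v < b
    · exact Or.inr (C2 v u (hsym u v hE) h.1 h.2)
    · exact Or.inl h
  have K6 : ¬(b < v ∧ v < j) ∨ (b ≤ u ∧ u ≤ j) := by
    by_cases h : b < v ∧ v < j
    · exact Or.inr (C3 v u (hsym u v hE) h.1 h.2)
    · exact Or.inl h
  simp only [Finset.mem_insert, Finset.mem_singleton]
  omega

lemma build (hsym : ∀ u v, Ed u v → Ed v u)
    (HK : ∀ u v p q r t, Ed u v → Ed p q → Ed r t →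
      CrossN u v p q → CrossN u v r t → ((p = r ∧ q = t) ∨ (p = t ∧ q = r))) :
    ∀ (N i j : ℕ), j ≤ i + N → i < j → CleanC Ed i j → Nonempty (RD Ed i j) := by
  intro N
  induction N with
  | zero => intro i j hN hij _; omega
  | succ N ih =>
    intro i j hN hij hcl
    rcases eq_or_lt_of_le (show i + 1 ≤ j by omega) with heq | hij2
    · -- leaf: j = i + 1
      subst heq
      refine glue_ex (k := 0) (aa := fun t => t.elim0) (bb := fun t => t.elim0)
        {i, i + 1} (fun t => t.elim0) (by simp) (by simp) ?_ ?_
        (fun t => t.elim0) (fun t => t.elim0) (fun t => t.elim0) (fun t => t.elim0) ?_ ?_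
      · intro v hv
        simp only [Finset.mem_insert, Finset.mem_singleton] at hv
        omega
      · have h1 := Finset.card_insert_le i ({i + 1} : Finset ℕ)
        have h2 : ({i + 1} : Finset ℕ).card = 1 := Finset.card_singleton _
        omega
      · intro v h1 h2
        left
        simp only [Finset.mem_insert, Finset.mem_singleton]
        omega
      · intro u v _ h1 h2 h3 h4
        left
        simp only [Finset.mem_insert, Finset.mem_singleton]
        omega
    · rcases splitLemma hsym HK hij2 hcl with ⟨c, b, hic, hcb, hbj, Q1, Q2, Q3⟩ |
        ⟨m, him, hmj, C1, C2⟩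
      · obtain ⟨R1⟩ := ih i c (by omega) (by omega) Q1
        obtain ⟨R2⟩ := ih c b (by omega) (by omega) Q2
        obtain ⟨R3⟩ := ih b j (by omega) (by omega) Q3
        have hedge := hedge4 hsym hic hcb hbj Q1 Q2 Q3
        refine glue_ex (k := 3)
          (aa := fun t => if t.val = 0 then i else if t.val = 1 then c else b)
          (bb := fun t => if t.val = 0 then c else if t.val = 1 then b else j)
          {i, c, b, j}
          (fun t => match t with
            | ⟨0, _⟩ => R1
            | ⟨1, _⟩ => R2
            | ⟨2, _⟩ => R3)
          (by simp) (by simp) ?_ (card_le_four _ _ _ _) ?_ ?_ ?_ ?_ ?_ ?_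
        · intro v hv
          simp only [Finset.mem_insert, Finset.mem_singleton] at hv
          omega
        · intro t
          rcases t with ⟨tv, ht⟩
          interval_cases tv <;> simp
        · intro t
          rcases t with ⟨tv, ht⟩
          interval_cases tv <;> simp
        · intro t t' hne v hv1 hv2 hv3 hv4
          simp only [Finset.mem_insert, Finset.mem_singleton]
          rcases t with ⟨tv, ht⟩
          rcases t' with ⟨tv', ht'⟩
          have hne' : tv ≠ tv' := fun h => hne (Fin.ext h)
          interval_cases tv <;> interval_cases tv' <;>
            first
            | exact absurd rfl hne'
            | (simp at hv1 hv2 hv3 hv4; omega)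
        · intro t v hvB hv1 hv2
          simp only [Finset.mem_insert, Finset.mem_singleton] at hvB
          rcases t with ⟨tv, ht⟩
          interval_cases tv <;> simp at hv1 hv2 ⊢ <;> omega
        · intro v h1 h2
          rcases le_or_gt v c with h | h
          · exact Or.inr ⟨⟨0, by omega⟩, by simpa using h1, by simpa using h⟩
          rcases le_or_gt v b with h' | h'
          · exact Or.inr ⟨⟨1, by omega⟩, by simpa using h.le, by simpa using h'⟩
          · exact Or.inr ⟨⟨2, by omega⟩, by simpa using h'.le, by simpa using h2⟩
        · intro u v hE h1 h2 h3 h4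
          rcases hedge u v hE h1 h2 h3 h4 with h | h | h | h
          · exact Or.inl h
          · exact Or.inr ⟨⟨0, by omega⟩, by simpa using h.1, by simpa using h.2.1,
              by simpa using h.2.2.1, by simpa using h.2.2.2⟩
          · exact Or.inr ⟨⟨1, by omega⟩, by simpa using h.1, by simpa using h.2.1,
              by simpa using h.2.2.1, by simpa using h.2.2.2⟩
          · exact Or.inr ⟨⟨2, by omega⟩, by simpa using h.1, by simpa using h.2.1,
              by simpa using h.2.2.1, by simpa using h.2.2.2⟩
      · obtain ⟨R1⟩ := ih i m (by omega) (by omega) C1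
        obtain ⟨R2⟩ := ih m j (by omega) (by omega) C2
        have hedge := hedge3 hsym him hmj C1 C2
        refine glue_ex (k := 2)
          (aa := fun t => if t.val = 0 then i else m)
          (bb := fun t => if t.val = 0 then m else j)
          {i, m, j}
          (fun t => match t with
            | ⟨0, _⟩ => R1
            | ⟨1, _⟩ => R2)
          (by simp) (by simp) ?_ ?_ ?_ ?_ ?_ ?_ ?_ ?_
        · intro v hv
          simp only [Finset.mem_insert, Finset.mem_singleton] at hv
          omega
        · have h1 := Finset.card_insert_le i ({m, j} : Finset ℕ)
          have h2 := Finset.card_insert_le m ({j} : Finset ℕ)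
          have h3 : ({j} : Finset ℕ).card = 1 := Finset.card_singleton _
          omega
        · intro t
          rcases t with ⟨tv, ht⟩
          interval_cases tv <;> simp
        · intro t
          rcases t with ⟨tv, ht⟩
          interval_cases tv <;> simp
        · intro t t' hne v hv1 hv2 hv3 hv4
          simp only [Finset.mem_insert, Finset.mem_singleton]
          rcases t with ⟨tv, ht⟩
          rcases t' with ⟨tv', ht'⟩
          have hne' : tv ≠ tv' := fun h => hne (Fin.ext h)
          interval_cases tv <;> interval_cases tv' <;>
            first
            | exact absurd rfl hne'
            | (simp at hv1 hv2 hv3 hv4; omega)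
        · intro t v hvB hv1 hv2
          simp only [Finset.mem_insert, Finset.mem_singleton] at hvB
          rcases t with ⟨tv, ht⟩
          interval_cases tv <;> simp at hv1 hv2 ⊢ <;> omega
        · intro v h1 h2
          rcases le_or_gt v m with h | h
          · exact Or.inr ⟨⟨0, by omega⟩, by simpa using h1, by simpa using h⟩
          · exact Or.inr ⟨⟨1, by omega⟩, by simpa using h.le, by simpa using h2⟩
        · intro u v hE h1 h2 h3 h4
          rcases hedge u v hE h1 h2 h3 h4 with h | h | h
          · exact Or.inl h
          · exact Or.inr ⟨⟨0, by omega⟩, by simpa using h.1, by simpa using h.2.1,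
              by simpa using h.2.2.1, by simpa using h.2.2.2⟩
          · exact Or.inr ⟨⟨1, by omega⟩, by simpa using h.1, by simpa using h.2.1,
              by simpa using h.2.2.1, by simpa using h.2.2.2⟩

end BuildPart
section ZModPart

lemma val_sub' {n : ℕ} [NeZero n] (x a : ZMod n) :
    (x - a).val = if a.val ≤ x.val then x.val - a.val else x.val + n - a.val := by
  have hx := ZMod.val_lt x
  have ha := ZMod.val_lt a
  rcases eq_or_ne a 0 with rfl | ha0
  · simp [ZMod.val_zero]
  · have ha1 : 0 < a.val := by
      rcases Nat.eq_zero_or_pos a.val with h | h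
      · exact absurd ((ZMod.val_eq_zero a).mp h) ha0
      · exact h
    rw [sub_eq_add_neg, ZMod.val_add, ZMod.neg_val, if_neg ha0]
    rcases le_or_gt a.val x.val with h | h
    · rw [if_pos h]
      have he : x.val + (n - a.val) = (x.val - a.val) + n := by omega
      rw [he, Nat.add_mod_right, Nat.mod_eq_of_lt (by omega)]
    · rw [if_neg (by omega)]
      have he : x.val + (n - a.val) = x.val + n - a.val := by omega
      rw [he, Nat.mod_eq_of_lt (by omega)]

lemma mem_arc_iff {n : ℕ} [NeZero n] (a b x : ZMod n) :
    x ∈ arcBetween a b ↔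
      ((a.val < x.val ∧ x.val < b.val) ∨ (b.val < a.val ∧ (x.val < b.val ∨ a.val < x.val))) := by
  have hx := ZMod.val_lt x
  have ha := ZMod.val_lt a
  have hb := ZMod.val_lt b
  simp only [arcBetween, Set.mem_setOf_eq, val_sub']
  split_ifs <;> omega

lemma castinj {n : ℕ} {p q : ℕ} (hp : p < n) (hq : q < n) (h : (p : ZMod n) = q) : p = q := by
  rw [← ZMod.val_cast_of_lt hp, ← ZMod.val_cast_of_lt hq, h]

lemma edgesCross_of {n : ℕ} [NeZero n] {a b c d : ℕ} (ha : a < n) (hb : b < n) (hc : c < n)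
    (hd : d < n) (h : CrossN a b c d) :
    EdgesCross (a : ZMod n) (b : ZMod n) (c : ZMod n) (d : ZMod n) := by
  obtain ⟨h1, h2, h3, h4, h5, h6, h7⟩ := h
  refine ⟨fun he => h1 (castinj ha hb he), fun he => h2 (castinj ha hc he),
    fun he => h3 (castinj ha hd he), fun he => h4 (castinj hb hc he),
    fun he => h5 (castinj hb hd he), fun he => h6 (castinj hc hd he), ?_⟩
  rw [mem_arc_iff, mem_arc_iff, mem_arc_iff, mem_arc_iff, ZMod.val_cast_of_lt ha,
    ZMod.val_cast_of_lt hb, ZMod.val_cast_of_lt hc, ZMod.val_cast_of_lt hd]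
  simp only [Xor', xor_def] at h7 ⊢
  omega

def EdN {n : ℕ} (G' : SimpleGraph (ZMod n)) (a b : ℕ) : Prop :=
  a < n ∧ b < n ∧ G'.Adj (a : ZMod n) (b : ZMod n)

lemma hk_of_drawing {n : ℕ} [NeZero n] (G' : SimpleGraph (ZMod n))
    (hd : OuterKPlanarDrawing G' 1) :
    ∀ u v p q r t : ℕ, EdN G' u v → EdN G' p q → EdN G' r t →
      CrossN u v p q → CrossN u v r t → ((p = r ∧ q = t) ∨ (p = t ∧ q = r)) := by
  intro u v p q r t hu hp hr c1 c2
  by_contra hcon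
  push_neg at hcon
  obtain ⟨hu1, hu2, hu3⟩ := hu
  obtain ⟨hp1, hp2, hp3⟩ := hp
  obtain ⟨hr1, hr2, hr3⟩ := hr
  set S := {e' | e' ∈ G'.edgeSet ∧ Sym2Cross s((u : ZMod n), (v : ZMod n)) e'} with hS
  have he : s((u : ZMod n), (v : ZMod n)) ∈ G'.edgeSet := (SimpleGraph.mem_edgeSet G').mpr hu3
  have hm1 : s((p : ZMod n), (q : ZMod n)) ∈ S :=
    ⟨(SimpleGraph.mem_edgeSet G').mpr hp3,
      ⟨u, v, p, q, rfl, rfl, edgesCross_of hu1 hu2 hp1 hp2 c1⟩⟩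
  have hm2 : s((r : ZMod n), (t : ZMod n)) ∈ S :=
    ⟨(SimpleGraph.mem_edgeSet G').mpr hr3,
      ⟨u, v, r, t, rfl, rfl, edgesCross_of hu1 hu2 hr1 hr2 c2⟩⟩
  have hne : s((p : ZMod n), (q : ZMod n)) ≠ s((r : ZMod n), (t : ZMod n)) := by
    intro hh
    rw [Sym2.eq_iff] at hh
    rcases hh with ⟨e1, e2⟩ | ⟨e1, e2⟩
    · exact hcon.1 (castinj hp1 hr1 e1) (castinj hp2 hr2 e2)
    · exact hcon.2 (castinj hp1 hr2 e1) (castinj hp2 hr1 e2)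
  have hsubset : ({s((p : ZMod n), (q : ZMod n)), s((r : ZMod n), (t : ZMod n))} : Set _) ⊆ S := by
    intro e he'
    rcases he' with rfl | rfl
    · exact hm1
    · exact hm2
  have h2le : 2 ≤ S.ncard := by
    rw [← Set.ncard_pair hne]
    exact Set.ncard_le_ncard hsubset (Set.toFinite S)
  have hle := hd _ he
  rw [← hS] at hle
  omega

end ZModPart
section TreePart

lemma cycle_aux {ι : Type} (root : ι) (par : ι → ι) (rk : ι → ℕ)
    (hroot : par root = root) (hpar : ∀ x, x ≠ root → rk (par x) < rk x)
    (x : ι) (c : (SimpleGraph.fromRel (fun a b => par a = b)).Walk x x) (hc : c.IsCycle)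
    (hmax : ∀ y ∈ c.support, rk y ≤ rk x) : False := by
  have hpar_of_adj : ∀ y, (SimpleGraph.fromRel (fun a b => par a = b)).Adj x y → rk y ≤ rk x →
      par x = y := by
    intro y hadj hy
    rw [SimpleGraph.fromRel_adj] at hadj
    obtain ⟨hne, h | h⟩ := hadj
    · exact h
    · exfalso
      have hyroot : y ≠ root := by
        intro h0
        rw [h0, hroot] at h
        exact hne (h.symm.trans h0.symm)
      have := hpar y hyroot
      rw [h] at this
      omega
  cases c with
  | nil => simpa using hc.three_le_length
  | cons hadj q =>
    rename_i y
    have hymem : y ∈ (SimpleGraph.Walk.cons hadj q).support := by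
      rw [SimpleGraph.Walk.support_cons]
      exact List.mem_cons_of_mem _ q.start_mem_support
    have hy : par x = y := hpar_of_adj y hadj (hmax y hymem)
    rcases hq : q.reverse with _ | ⟨hadj', q''⟩
    · exact hadj.ne rfl
    · rename_i z
      have hzmem : z ∈ q.support := by
        have hh : z ∈ q.reverse.support := by
          rw [hq, SimpleGraph.Walk.support_cons]
          exact List.mem_cons_of_mem _ q''.start_mem_support
        rwa [SimpleGraph.Walk.support_reverse, List.mem_reverse] at hh
      have hz : par x = z := by
        refine hpar_of_adj z hadj' (hmax z ?_)
        rw [SimpleGraph.Walk.support_cons]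
        exact List.mem_cons_of_mem _ hzmem
      have hyz : y = z := hy.symm.trans hz
      have hmemedge : s(x, z) ∈ q.edges := by
        have hh : s(x, z) ∈ q.reverse.edges := by
          rw [hq, SimpleGraph.Walk.edges_cons]
          exact List.mem_cons_self
        rwa [SimpleGraph.Walk.edges_reverse, List.mem_reverse] at hh
      have hnodup := hc.isCircuit.isTrail.edges_nodup
      rw [SimpleGraph.Walk.edges_cons] at hnodup
      rw [← hyz] at hmemedge
      exact (List.nodup_cons.mp hnodup).1 hmemedge

lemma RD_tree_decomp {V : Type*} [Fintype V] (G : SimpleGraph V) {Ed : ℕ → ℕ → Prop} {N : ℕ}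
    (w : V → ℕ) (hwinj : Function.Injective w) (hwle : ∀ v, w v ≤ N)
    (hEd : ∀ u v, G.Adj u v → Ed (w u) (w v))
    (R : RD Ed 0 N) : HasTreeDecompOfWidthLE G 3 := by
  classical
  letI := R.fin
  set T : SimpleGraph R.ι := SimpleGraph.fromRel (fun a b => R.par a = b) with hT
  have hadjpar : ∀ x, x ≠ R.root → T.Adj x (R.par x) := by
    intro x hx
    rw [hT, SimpleGraph.fromRel_adj]
    refine ⟨?_, Or.inl rfl⟩
    intro h0
    have := R.hpar x hx
    rw [← h0] at this
    omega
  have hreach : ∀ (s : ℕ) (x : R.ι), R.rk x ≤ s → T.Reachable x R.root := by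
    intro s
    induction s with
    | zero =>
      intro x hx
      by_cases h : x = R.root
      · subst h; exact SimpleGraph.Reachable.refl _
      · exact absurd (R.hpar x h) (by omega)
    | succ s ih =>
      intro x hx
      by_cases h : x = R.root
      · subst h; exact SimpleGraph.Reachable.refl _
      · exact (hadjpar x h).reachable.trans (ih (R.par x) (by have := R.hpar x h; omega))
  have htree : T.IsTree := by
    constructor
    · rw [SimpleGraph.connected_iff]
      exact ⟨fun a b => (hreach (R.rk a) a le_rfl).trans (hreach (R.rk b) b le_rfl).symm,
        ⟨R.root⟩⟩
    · intro v c hc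
      obtain ⟨x, hxmem, hxmax⟩ := Finset.exists_max_image c.support.toFinset R.rk
        ⟨v, by simp [SimpleGraph.Walk.start_mem_support]⟩
      rw [List.mem_toFinset] at hxmem
      have hc' := hc.rotate hxmem
      refine cycle_aux R.root R.par R.rk R.hroot R.hpar x (c.rotate x hxmem) hc' ?_
      intro y hy
      rw [SimpleGraph.Walk.mem_support_iff] at hy
      rcases hy with rfl | hy
      · exact le_rfl
      · refine hxmax y (List.mem_toFinset.mpr ?_)
        rw [SimpleGraph.Walk.mem_support_iff]
        exact Or.inr (((SimpleGraph.Walk.support_rotate c x hxmem).mem_iff).mp hy)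
  set bagV : R.ι → Finset V := fun x => Finset.univ.filter (fun v => w v ∈ R.bag x) with hbagV
  have hmemV : ∀ (v : V) (x : R.ι), v ∈ bagV x ↔ w v ∈ R.bag x := by
    intro v x
    rw [hbagV]
    simp [Finset.mem_filter]
  refine ⟨R.ι, inferInstance, T, bagV, htree, ?_, ?_, ?_, ?_⟩
  · intro v
    obtain ⟨x, hx⟩ := R.hcovv (w v) (Nat.zero_le _) (hwle v)
    exact ⟨x, (hmemV v x).mpr hx⟩
  · intro u v huv
    obtain ⟨x, hx1, hx2⟩ := R.hcove (w u) (w v) (hEd u v huv) (Nat.zero_le _) (hwle u)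
      (Nat.zero_le _) (hwle v)
    exact ⟨x, (hmemV u x).mpr hx1, (hmemV v x).mpr hx2⟩
  · intro v
    have hstep : ∀ (s : ℕ) (y : R.ι) (hy : y ∈ {i | v ∈ bagV i}), R.rk y ≤ s →
        (T.induce {i | v ∈ bagV i}).Reachable ⟨y, hy⟩
          ⟨R.vtop (w v), (hmemV v _).mpr (R.hvmem (w v) y ((hmemV v y).mp hy))⟩ := by
      intro s
      induction s with
      | zero =>
        intro y hy hrk
        by_cases hcase : y = R.vtop (w v)
        · subst hcase
          exact SimpleGraph.Reachable.refl _
        · exfalso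
          have hby : w v ∈ R.bag y := (hmemV v y).mp hy
          have hroot : y ≠ R.root := by
            intro h0
            exact hcase (h0.trans (R.hvroot (w v) (h0 ▸ hby)).symm)
          exact absurd (R.hpar y hroot) (by omega)
      | succ s ih =>
        intro y hy hrk
        by_cases hcase : y = R.vtop (w v)
        · subst hcase
          exact SimpleGraph.Reachable.refl _
        · have hby : w v ∈ R.bag y := (hmemV v y).mp hy
          have hroot : y ≠ R.root := by
            intro h0
            exact hcase (h0.trans (R.hvroot (w v) (h0 ▸ hby)).symm)
          have hparm : w v ∈ R.bag (R.par y) := R.hconn (w v) y hby hcase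
          have hadj : (T.induce {i | v ∈ bagV i}).Adj ⟨y, hy⟩
              ⟨R.par y, (hmemV v _).mpr hparm⟩ := hadjpar y hroot
          exact hadj.reachable.trans (ih (R.par y) _ (by have := R.hpar y hroot; omega))
    rw [SimpleGraph.connected_iff]
    constructor
    · rintro ⟨a, ha⟩ ⟨b, hb⟩
      exact (hstep (R.rk a) a ha le_rfl).trans (hstep (R.rk b) b hb le_rfl).symm
    · obtain ⟨x, hx⟩ := R.hcovv (w v) (Nat.zero_le _) (hwle v)
      exact ⟨⟨x, (hmemV v x).mpr hx⟩⟩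
  · intro x
    refine le_trans (Finset.card_le_card_of_injOn w ?_ ?_) (R.hcard x)
    · intro a ha
      exact (hmemV a x).mp ha
    · intro a _ b _ hab
      exact hwinj hab

end TreePart
/-- Every finite simple graph that is outer 1-planar has treewidth at most three. -/
theorem outer_one_planar_treewidth_le_three {V : Type*} [Fintype V]
    (G : SimpleGraph V) (h1p : OuterKPlanar G 1) :
    HasTreeDecompOfWidthLE G 3 := by
  classical
  obtain ⟨f, hf⟩ := h1p
  rcases le_or_gt (Fintype.card V) 1 with hn | hn
  · -- trivial case: at most one vertex
    refine ⟨Unit, inferInstance, ⊥, fun _ => Finset.univ, ⟨?_, ?_⟩,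
      fun v => ⟨(), Finset.mem_univ v⟩, fun u v _ => ⟨(), Finset.mem_univ u, Finset.mem_univ v⟩,
      ?_, fun _ => ?_⟩
    · rw [SimpleGraph.connected_iff]
      exact ⟨fun a b => by cases a; cases b; exact SimpleGraph.Reachable.refl _, ⟨()⟩⟩
    · intro v c hc
      cases c with
      | nil => simpa using hc.three_le_length
      | cons h q => exact h
    · intro v
      rw [SimpleGraph.connected_iff]
      constructor
      · intro a b
        have : a = b := Subsingleton.elim a b
        subst this
        exact SimpleGraph.Reachable.refl _
      · exact ⟨⟨(), by simp [Finset.mem_univ]⟩⟩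
    · rw [Finset.card_univ]
      omega
  · -- main case
    haveI : NeZero (Fintype.card V) := ⟨by omega⟩
    have hsym : ∀ u v, EdN (G.map f.toEmbedding) u v → EdN (G.map f.toEmbedding) v u :=
      fun u v h => ⟨h.2.1, h.1, h.2.2.symm⟩
    have HK := hk_of_drawing (G.map f.toEmbedding) hf
    have hclean : CleanC (EdN (G.map f.toEmbedding)) 0 (Fintype.card V - 1) := by
      intro p q hpq h1 h2
      exact ⟨Nat.zero_le _, by have := hpq.2.1; omega⟩
    obtain ⟨R⟩ := build hsym HK (Fintype.card V - 1) 0 (Fintype.card V - 1)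
      (by omega) (by omega) hclean
    have hcast : ∀ v : V, (((f v).val : ℕ) : ZMod (Fintype.card V)) = f v := by
      intro v
      rw [ZMod.natCast_val, ZMod.cast_id]
    refine RD_tree_decomp G (fun v => (f v).val) ?_ ?_ ?_ R
    · intro u v huv
      have h2 : ((f u).val : ZMod (Fintype.card V)) = ((f v).val : ZMod (Fintype.card V)) :=
        congrArg _ huv
      rw [hcast u, hcast v] at h2
      exact f.injective h2
    · intro v
      show (f v).val ≤ Fintype.card V - 1
      have := ZMod.val_lt (f v)
      omega
    · intro u v huv
      show EdN (G.map f.toEmbedding) (f u).val (f v).val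
      refine ⟨ZMod.val_lt (f u), ZMod.val_lt (f v), ?_⟩
      rw [hcast u, hcast v]
      exact SimpleGraph.map_adj_apply.mpr huv
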